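/- Let M be an N×N real matrix that is diagonalizable as M = Q Λ Q⁻¹, where Λ is diagonal with last diagonal entry 0 and all other diagonal entries belonging to a finite set {λ₁, …, λ_K} of nonzero reals. Then ∏_{k=1}^{K} (I − λₖ⁻¹ M) = v_N u_N, where v_N = Q e_N is the N-th column of Q (an eigenvector of M for the eigenvalue 0) and u_N = e_Nᵀ Q⁻¹ is the N-th row of Q⁻¹ (a left eigenvector of M for the eigenvalue 0). -/

import Mathlib

open Matrix

lemma conj_prod {R n : Type*} [Fintype n] [DecidableEq n] [CommRing R]
    (Q Qi : Matrix n n R) (h1 : Q * Qi = 1) (h2 : Qi * Q = 1)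
    (l : List (Matrix n n R)) :
    (l.map fun A => Q * A * Qi).prod = Q * l.prod * Qi := by
  induction l with
  | nil => simp [h1]
  | cons A t ih =>
      have hh : Qi * (Q * t.prod * Qi) = t.prod * Qi := by
        rw [← mul_assoc, ← mul_assoc, h2, one_mul]
      rw [List.map_cons, List.prod_cons, ih, mul_assoc (Q * A), hh,
        ← mul_assoc, mul_assoc Q A, List.prod_cons]

lemma diag_prod {R n : Type*} [Fintype n] [DecidableEq n] [CommRing R]
    (l : List (n → R)) :
    (l.map Matrix.diagonal).prod = Matrix.diagonal fun j => (l.map (· j)).prod := by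
  induction l with
  | nil => simp [Matrix.diagonal_one]
  | cons d t ih => simp [ih, Matrix.diagonal_mul_diagonal]

theorem stmt6 {n K : ℕ} (M Q Λ : Matrix (Fin (n + 1)) (Fin (n + 1)) ℝ)
    (hQ : IsUnit Q) (hM : M = Q * Λ * Q⁻¹)
    (hdiag : Λ.IsDiag)
    (hlast : Λ (Fin.last n) (Fin.last n) = 0)
    (lam : Fin K → ℝ) (hne : ∀ k, lam k ≠ 0)
    (hmem : ∀ j : Fin (n + 1), j ≠ Fin.last n → ∃ k, Λ j j = lam k) :
    (List.ofFn
        (fun k : Fin K =>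
          (1 : Matrix (Fin (n + 1)) (Fin (n + 1)) ℝ) - (lam k)⁻¹ • M)).prod
      = vecMulVec (fun i => Q i (Fin.last n)) (fun j => Q⁻¹ (Fin.last n) j) := by
  have hdet : IsUnit Q.det := (Matrix.isUnit_iff_isUnit_det Q).mp hQ
  have h1 : Q * Q⁻¹ = 1 := Matrix.mul_nonsing_inv Q hdet
  have h2 : Q⁻¹ * Q = 1 := Matrix.nonsing_inv_mul Q hdet
  have hΛ : Matrix.diagonal (fun j => Λ j j) = Λ := hdiag.diagonal_diag
  have factor : ∀ k : Fin K,
      (1 : Matrix (Fin (n + 1)) (Fin (n + 1)) ℝ) - (lam k)⁻¹ • M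
        = Q * Matrix.diagonal (fun j => 1 - (lam k)⁻¹ * Λ j j) * Q⁻¹ := by
    intro k
    rw [hM]
    have : Matrix.diagonal (fun j => 1 - (lam k)⁻¹ * Λ j j)
        = 1 - (lam k)⁻¹ • Λ := by
      rw [← hΛ]
      ext i j
      by_cases hij : i = j <;>
        simp [Matrix.diagonal_apply, hij, Matrix.one_apply]
    rw [this, Matrix.mul_sub, Matrix.sub_mul, Matrix.mul_one, h1,
      Matrix.mul_smul, Matrix.smul_mul]
  have key : (List.ofFn
        (fun k : Fin K =>
          (1 : Matrix (Fin (n + 1)) (Fin (n + 1)) ℝ) - (lam k)⁻¹ • M)).prod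
      = Q * Matrix.diagonal
          (fun j => (List.ofFn (fun k : Fin K => 1 - (lam k)⁻¹ * Λ j j)).prod) * Q⁻¹ := by
    have : (List.ofFn
        (fun k : Fin K =>
          (1 : Matrix (Fin (n + 1)) (Fin (n + 1)) ℝ) - (lam k)⁻¹ • M))
        = (List.ofFn (fun k : Fin K => fun j => 1 - (lam k)⁻¹ * Λ j j)).map
            (fun d => Q * Matrix.diagonal d * Q⁻¹) := by
      rw [List.map_ofFn]
      exact congrArg List.ofFn (funext fun k => factor k)
    rw [this]
    have := conj_prod Q Q⁻¹ h1 h2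
      ((List.ofFn (fun k : Fin K => fun j => 1 - (lam k)⁻¹ * Λ j j)).map Matrix.diagonal)
    simp only [List.map_map] at this ⊢
    rw [show ((fun A => Q * A * Q⁻¹) ∘ Matrix.diagonal : (Fin (n+1) → ℝ) → _)
      = fun d => Q * Matrix.diagonal d * Q⁻¹ from rfl] at this
    rw [this, diag_prod]
    simp only [List.map_ofFn]
    rfl
  rw [key]
  have hd : (fun j => (List.ofFn (fun k : Fin K => 1 - (lam k)⁻¹ * Λ j j)).prod)
      = Pi.single (Fin.last n) 1 := by
    funext j
    by_cases hj : j = Fin.last n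
    · subst hj
      simp [hlast, List.prod_eq_one]
    · obtain ⟨k, hk⟩ := hmem j hj
      rw [Pi.single_eq_of_ne hj]
      apply List.prod_eq_zero
      refine List.mem_ofFn.mpr ⟨k, ?_⟩
      show (1 : ℝ) - (lam k)⁻¹ * Λ j j = 0
      rw [hk, inv_mul_cancel₀ (hne k), sub_self]
  rw [hd]
  ext i j
  rw [Matrix.mul_apply]
  simp only [Matrix.mul_diagonal]
  rw [Finset.sum_eq_single (Fin.last n)]
  · simp [Matrix.vecMulVec_apply]
  · intro b _ hb
    simp [Pi.single_eq_of_ne hb]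
  · simp
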